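/- Let Δ_A ⊆ ℝ^A denote the standard probability simplex, let u ∈ ℝ^A, and let x ∈ Δ_A be such that the support of x is contained in the set of coordinates minimizing u, i.e., x(a) > 0 implies u(a) = min_{a'} u(a'). Then for every stepsize η > 0, the Euclidean projection of x − η·u onto Δ_A equals x. -/

import Mathlib

open scoped RealInnerProductSpace


/-- If the support of `x ∈ Δ_A` is contained in the set of minimizers of `u`,
then the Euclidean projection of `x - η • u` onto the simplex equals `x`.
The projection is characterized as the nearest point of the simplex. -/
theorem proj_simplex_fixed_at_equilibrium
    (A : ℕ) (hA : 0 < A)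
    (u x : EuclideanSpace ℝ (Fin A))
    (hx : (∀ a, 0 ≤ x a) ∧ ∑ a, x a = 1)
    (hsupp : ∀ a, 0 < x a → ∀ a', u a ≤ u a')
    (η : ℝ) (hη : 0 < η)
    (p : EuclideanSpace ℝ (Fin A))
    (hpmem : (∀ a, 0 ≤ p a) ∧ ∑ a, p a = 1)
    (hpnear : ∀ q : EuclideanSpace ℝ (Fin A),
      ((∀ a, 0 ≤ q a) ∧ ∑ a, q a = 1) → ‖x - η • u - p‖ ≤ ‖x - η • u - q‖) :
    p = x := by
  haveI : Nonempty (Fin A) := ⟨⟨0, hA⟩⟩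
  obtain ⟨a₀, ha₀⟩ := Finite.exists_min u
  set m := u a₀ with hm
  -- ⟪u, x⟫ = m
  have h1 : ∑ a, u a * x a = m := by
    have : ∀ a ∈ Finset.univ, u a * x a = m * x a := by
      intro a _
      rcases (hx.1 a).lt_or_eq with h | h
      · rw [le_antisymm (hsupp a h a₀) (ha₀ a)]
      · rw [← h, mul_zero, mul_zero]
    rw [Finset.sum_congr rfl this, ← Finset.mul_sum, hx.2, mul_one]
  -- m ≤ ⟪u, p⟫
  have h2 : m ≤ ∑ a, u a * p a := by
    calc m = ∑ a, m * p a := by rw [← Finset.mul_sum, hpmem.2, mul_one]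
    _ ≤ ∑ a, u a * p a :=
      Finset.sum_le_sum fun a _ => mul_le_mul_of_nonneg_right (ha₀ a) (hpmem.1 a)
  set v : EuclideanSpace ℝ (Fin A) := x - η • u with hv
  have hinner : (inner ℝ (v - x) (p - x) : ℝ) ≤ 0 := by
    have hvx : v - x = (-η) • u := by
      rw [hv, sub_sub_cancel_left, neg_smul]
    rw [hvx, real_inner_smul_left, inner_sub_right]
    have hup : (inner ℝ u p : ℝ) = ∑ a, u a * p a := by
      simp [PiLp.inner_apply, RCLike.inner_apply, mul_comm]
    have hux : (inner ℝ u x : ℝ) = ∑ a, u a * x a := by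
      simp [PiLp.inner_apply, RCLike.inner_apply, mul_comm]
    rw [hup, hux, h1]
    have : 0 ≤ ∑ a, u a * p a - m := by linarith
    nlinarith
  have key : ‖v - p‖ ≤ ‖v - x‖ := hpnear x ⟨hx.1, hx.2⟩
  have hsq : ‖v - p‖ ^ 2 ≤ ‖v - x‖ ^ 2 :=
    pow_le_pow_left₀ (norm_nonneg _) key 2
  have hexp : ‖v - p‖ ^ 2 = ‖v - x‖ ^ 2 - 2 * (inner ℝ (v - x) (p - x) : ℝ) + ‖p - x‖ ^ 2 := by
    have h3 : v - p = (v - x) - (p - x) := by abel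
    rw [h3, @norm_sub_sq_real]
  have hpx : ‖p - x‖ ^ 2 ≤ 0 := by nlinarith
  have : ‖p - x‖ = 0 := by
    have := norm_nonneg (p - x); nlinarith
  have := norm_eq_zero.mp this
  exact sub_eq_zero.mp this
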